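/- Let B be a real symmetric d×d matrix with 0 ≤ ⟨Bv, v⟩ ≤ L₁‖v‖² for all v ∈ ℝ^d (for some L₁ > 0), let α ∈ (0,1], and let η be a scalar with 0 < η ≤ α/(2L₁). Set A = I + ηB, let b ∈ ℝ^d with b ≠ 0, and define s₁ = (⟨b, Ab⟩/‖Ab‖²)·b. Then ‖s₁‖ ≥ ‖b‖/(1 + ηL₁), ‖As₁ − b‖ ≤ ηL₁‖b‖, and consequently ‖As₁ − b‖ ≤ α‖s₁‖. -/

import Mathlib

open scoped RealInnerProductSpace

noncomputable section

/-- The continuous linear map on Euclidean space induced by a square real matrix. -/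
def matCLM {d : ℕ} (M : Matrix (Fin d) (Fin d) ℝ) :
    EuclideanSpace ℝ (Fin d) →L[ℝ] EuclideanSpace ℝ (Fin d) :=
  Matrix.toEuclideanCLM (𝕜 := ℝ) M

/-- Pure real-arithmetic core of statement 18. -/
lemma stmt18_aux (L₁ α η q N r D c β x y : ℝ)
    (hL₁ : 0 < L₁) (hα0 : 0 < α) (hα1 : α ≤ 1) (hη0 : 0 < η)
    (hηL : η * L₁ ≤ α / 2)
    (hβ : 0 < β) (hN : N = β ^ 2)
    (hq0 : 0 ≤ q) (hq1 : q ≤ L₁ * N) (hr0 : 0 ≤ r) (hr1 : r ≤ L₁ * q)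
    (hD : D = N + 2 * η * q + η ^ 2 * r) (hc : c = (N + η * q) / D)
    (hx : x = c * β) (hy0 : 0 ≤ y)
    (hysq : y ^ 2 = c ^ 2 * D - 2 * c * (N + η * q) + N) :
    β / (1 + η * L₁) ≤ x ∧ y ≤ η * L₁ * β ∧ y ≤ α * x := by
  have hbN : 0 < N := by rw [hN]; positivity
  have hηL1 : (0:ℝ) < 1 + η * L₁ := by positivity
  have hDpos : 0 < D := by
    rw [hD]; linarith [mul_nonneg hη0.le hq0, mul_nonneg (sq_nonneg η) hr0]
  have hDN : N ≤ D := by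
    rw [hD]; linarith [mul_nonneg hη0.le hq0, mul_nonneg (sq_nonneg η) hr0]
  have hcpos : 0 < c := by rw [hc]; positivity
  have goal1 : β / (1 + η * L₁) ≤ x := by
    rw [hx, div_le_iff₀ hηL1]
    have key : D ≤ (1 + η * L₁) * (N + η * q) := by
      rw [hD]
      linarith [mul_nonneg hη0.le (sub_nonneg.mpr hq1),
        mul_nonneg (sq_nonneg η) (sub_nonneg.mpr hr1)]
    have h1c : 1 / (1 + η * L₁) ≤ c := by
      rw [hc, div_le_div_iff₀ hηL1 hDpos]
      linarith
    rw [div_le_iff₀ hηL1] at h1c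
    linarith [mul_le_mul_of_nonneg_right h1c hβ.le]
  have goal2 : y ≤ η * L₁ * β := by
    have hcD : c * D = N + η * q := by
      rw [hc, div_mul_cancel₀]; exact ne_of_gt hDpos
    have hle : y ^ 2 ≤ (η * L₁ * β) ^ 2 := by
      rw [hysq]
      have h1 : c ^ 2 * D = c * (N + η * q) := by rw [pow_two, mul_assoc, hcD]
      rw [h1]
      have h2 : N - c * (N + η * q) = (N * D - (N + η * q) ^ 2) / D := by
        rw [eq_div_iff hDpos.ne', ← hcD]; ring
      have h3 : N * D - (N + η * q) ^ 2 = η ^ 2 * (r * N - q ^ 2) := by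
        rw [hD]; ring
      have h4 : η ^ 2 * (r * N - q ^ 2) ≤ (η ^ 2 * L₁ ^ 2 * N) * D := by
        have hA1 : r * N ≤ L₁ ^ 2 * N ^ 2 := by
          calc r * N ≤ (L₁ * q) * N := mul_le_mul_of_nonneg_right hr1 hbN.le
            _ = L₁ * (q * N) := by ring
            _ ≤ L₁ * ((L₁ * N) * N) :=
              mul_le_mul_of_nonneg_left
                (mul_le_mul_of_nonneg_right hq1 hbN.le) hL₁.le
            _ = L₁ ^ 2 * N ^ 2 := by ring
        have hA2 : r * N - q ^ 2 ≤ L₁ ^ 2 * N ^ 2 := by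
          linarith [sq_nonneg q]
        have hA3 := mul_le_mul_of_nonneg_left hA2 (sq_nonneg η)
        have hA4 := mul_le_mul_of_nonneg_left hDN
          (show (0:ℝ) ≤ η ^ 2 * L₁ ^ 2 * N by positivity)
        linarith [hA3, hA4]
      have h5 : (η * L₁ * β) ^ 2 = η ^ 2 * L₁ ^ 2 * N := by rw [hN]; ring
      have h6 : (N * D - (N + η * q) ^ 2) / D ≤ η ^ 2 * L₁ ^ 2 * N := by
        rw [div_le_iff₀ hDpos, h3]; exact h4
      linarith [h2, h6, h5.ge, h5.le]
    have hy : 0 ≤ η * L₁ * β := by positivity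
    calc y = Real.sqrt (y ^ 2) := by rw [Real.sqrt_sq hy0]
      _ ≤ Real.sqrt ((η * L₁ * β) ^ 2) := Real.sqrt_le_sqrt hle
      _ = η * L₁ * β := Real.sqrt_sq hy
  refine ⟨goal1, goal2, ?_⟩
  have h7 : η * L₁ * (1 + η * L₁) ≤ α := by
    have hu : 0 < η * L₁ := mul_pos hη0 hL₁
    have hu2 : η * L₁ ≤ 1 / 2 := by linarith
    have hp : (η * L₁) * (η * L₁) ≤ (α / 2) * (1 / 2) :=
      mul_le_mul hηL hu2 hu.le (by linarith)
    linarith [hp]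
  have h8 : η * L₁ * β ≤ α * (β / (1 + η * L₁)) := by
    rw [mul_div_assoc', le_div_iff₀ hηL1]
    linarith [mul_le_mul_of_nonneg_right h7 hβ.le]
  have h9 : α * (β / (1 + η * L₁)) ≤ α * x :=
    mul_le_mul_of_nonneg_left goal1 hα0.le
  linarith

/-- When the step size satisfies `η ≤ α/(2L₁)`, the first conjugate
residual iterate `s₁` for the system `(I + ηB)s = b` already satisfies the relative
residual stopping test `‖As₁ − b‖ ≤ α‖s₁‖`. -/
theorem stmt18 {d : ℕ}
    (L₁ : ℝ) (hL₁ : 0 < L₁)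
    (B : Matrix (Fin d) (Fin d) ℝ) (hBsymm : B.IsSymm)
    (hB : ∀ v : EuclideanSpace ℝ (Fin d),
      0 ≤ ⟪matCLM B v, v⟫ ∧ ⟪matCLM B v, v⟫ ≤ L₁ * ‖v‖ ^ 2)
    (α : ℝ) (hα0 : 0 < α) (hα1 : α ≤ 1)
    (η : ℝ) (hη0 : 0 < η) (hη1 : η ≤ α / (2 * L₁))
    (A : Matrix (Fin d) (Fin d) ℝ) (hA : A = 1 + η • B)
    (b : EuclideanSpace ℝ (Fin d)) (hb : b ≠ 0)
    (s₁ : EuclideanSpace ℝ (Fin d))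
    (hs₁ : s₁ = (⟪b, matCLM A b⟫ / ‖matCLM A b‖ ^ 2) • b) :
    ‖b‖ / (1 + η * L₁) ≤ ‖s₁‖
      ∧ ‖matCLM A s₁ - b‖ ≤ η * L₁ * ‖b‖
      ∧ ‖matCLM A s₁ - b‖ ≤ α * ‖s₁‖ := by
  set T := matCLM B with hT
  have hsym : ∀ v w : EuclideanSpace ℝ (Fin d), ⟪T v, w⟫ = ⟪v, T w⟫ := by
    have h : star T = T := by
      rw [hT]; unfold matCLM
      rw [← map_star]
      congr 1
    rw [ContinuousLinearMap.star_eq_adjoint] at h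
    intro v w
    conv_lhs => rw [← h]
    exact ContinuousLinearMap.adjoint_inner_left _ _ _
  have hCS : ∀ v w : EuclideanSpace ℝ (Fin d),
      ⟪T v, w⟫ ^ 2 ≤ ⟪T v, v⟫ * ⟪T w, w⟫ := by
    intro v w
    have hq : ∀ t : ℝ,
        0 ≤ ⟪T w, w⟫ * (t * t) + (2 * ⟪T v, w⟫) * t + ⟪T v, v⟫ := by
      intro t
      have h0 := (hB (v + t • w)).1
      have hcomm : ⟪T w, v⟫ = ⟪T v, w⟫ := by rw [hsym w v, real_inner_comm]
      have hexp : ⟪T (v + t • w), v + t • w⟫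
          = ⟪T w, w⟫ * (t * t) + (2 * ⟪T v, w⟫) * t + ⟪T v, v⟫ := by
        rw [map_add, map_smul]
        simp only [inner_add_left, inner_add_right, real_inner_smul_left,
          real_inner_smul_right]
        rw [hcomm]; ring
      rw [hexp] at h0; exact h0
    have hd := discrim_le_zero hq
    rw [discrim] at hd
    nlinarith
  have hTb : ∀ v, ‖T v‖ ^ 2 ≤ L₁ * ⟪T v, v⟫ := by
    intro v
    have h1 := hCS v (T v)
    have h2 := (hB (T v)).2
    have h3 := (hB v).1
    have h4 : ⟪T v, T v⟫ = ‖T v‖ ^ 2 := real_inner_self_eq_norm_sq (T v)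
    rw [h4] at h1
    rcases eq_or_lt_of_le (sq_nonneg ‖T v‖) with h5 | h5
    · nlinarith
    · nlinarith
  have hbpos : 0 < ‖b‖ := norm_pos_iff.mpr hb
  have hq0 : 0 ≤ ⟪T b, b⟫ := (hB b).1
  have hq1 : ⟪T b, b⟫ ≤ L₁ * ‖b‖ ^ 2 := (hB b).2
  have hr0 : (0:ℝ) ≤ ‖T b‖ ^ 2 := by positivity
  have hr1 : ‖T b‖ ^ 2 ≤ L₁ * ⟪T b, b⟫ := hTb b
  have hηL : η * L₁ ≤ α / 2 := by
    have h2L : (0:ℝ) < 2 * L₁ := by positivity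
    rw [le_div_iff₀ h2L] at hη1
    linarith
  have hAb : matCLM A b = b + η • T b := by
    rw [hA]; unfold matCLM
    rw [map_add, map_smul, map_one]
    rfl
  have hqc : ⟪b, T b⟫ = ⟪T b, b⟫ := (real_inner_comm b (T b)).symm
  have hinner : ⟪b, matCLM A b⟫ = ‖b‖ ^ 2 + η * ⟪T b, b⟫ := by
    rw [hAb, inner_add_right, real_inner_smul_right, real_inner_self_eq_norm_sq,
      hqc]
  have hD : ‖matCLM A b‖ ^ 2
      = ‖b‖ ^ 2 + 2 * η * ⟪T b, b⟫ + η ^ 2 * ‖T b‖ ^ 2 := by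
    rw [hAb, ← real_inner_self_eq_norm_sq]
    simp only [inner_add_left, inner_add_right, real_inner_smul_left,
      real_inner_smul_right]
    rw [real_inner_self_eq_norm_sq, real_inner_self_eq_norm_sq, hqc]
    ring
  have hc : ⟪b, matCLM A b⟫ / ‖matCLM A b‖ ^ 2
      = (‖b‖ ^ 2 + η * ⟪T b, b⟫) / ‖matCLM A b‖ ^ 2 := by rw [hinner]
  have hDpos : (0:ℝ) < ‖matCLM A b‖ ^ 2 := by
    rw [hD]
    linarith [mul_nonneg hη0.le hq0, mul_nonneg (sq_nonneg η) hr0,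
      pow_pos hbpos 2]
  have hcpos : 0 < ⟪b, matCLM A b⟫ / ‖matCLM A b‖ ^ 2 := by
    rw [hc]
    apply div_pos _ hDpos
    linarith [mul_nonneg hη0.le hq0, pow_pos hbpos 2]
  have hs1norm : ‖s₁‖ = (⟪b, matCLM A b⟫ / ‖matCLM A b‖ ^ 2) * ‖b‖ := by
    rw [hs₁, norm_smul, Real.norm_eq_abs, abs_of_pos hcpos]
  have hAs₁ : matCLM A s₁ = (⟪b, matCLM A b⟫ / ‖matCLM A b‖ ^ 2) • matCLM A b := by
    rw [hs₁, map_smul]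
  have hsq : ‖matCLM A s₁ - b‖ ^ 2
      = (⟪b, matCLM A b⟫ / ‖matCLM A b‖ ^ 2) ^ 2 * ‖matCLM A b‖ ^ 2
        - 2 * (⟪b, matCLM A b⟫ / ‖matCLM A b‖ ^ 2) * (‖b‖ ^ 2 + η * ⟪T b, b⟫)
        + ‖b‖ ^ 2 := by
    rw [hAs₁, ← real_inner_self_eq_norm_sq]
    simp only [inner_sub_left, inner_sub_right, real_inner_smul_left,
      real_inner_smul_right]
    rw [real_inner_self_eq_norm_sq, real_inner_comm b (matCLM A b), hinner,
      real_inner_self_eq_norm_sq]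
    ring
  exact stmt18_aux L₁ α η ⟪T b, b⟫ (‖b‖ ^ 2) (‖T b‖ ^ 2) (‖matCLM A b‖ ^ 2)
    (⟪b, matCLM A b⟫ / ‖matCLM A b‖ ^ 2) ‖b‖ ‖s₁‖ ‖matCLM A s₁ - b‖
    hL₁ hα0 hα1 hη0 hηL hbpos rfl hq0 hq1 hr0 hr1 hD hc hs1norm (norm_nonneg _) hsq
end
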